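/- Fix an integer q ≥ 2. Let H_s be an m×n real matrix with all entries in {0,1}, with exactly c ones per column and d ones per row; let L = H_sᵀ·H_s, λ₁ = cd, and let λ₂ < λ₁ satisfy v·L·vᵀ ≤ λ₂·‖v‖₂² for every v ∈ ℝⁿ with ⟨v, 𝟏⟩ = 0. For each row index j let I_j = { i : (H_s)_{j,i} = 1 }. For each i ∈ {1,…,n}, let f_i(0), …, f_i(q−1) be nonnegative reals with Σ_{k=0}^{q−1} f_i(k) = 1, set x_i = Σ_{k=1}^{q−1} f_i(k), and assume that for every j and every ℓ ∈ I_j, Σ_{i ∈ I_j \ {ℓ}} x_i ≥ x_ℓ. Define S = 2 Σ_{i=1}^{n} ( 1 − Σ_{k=0}^{q−1} f_i(k) cos(2πk/q) ) and V = Σ_{i=1}^{n} ( Σ_{k=0}^{q−1} f_i(k)² + 2 Σ_{0≤k<ℓ≤q−1} f_i(k) f_i(ℓ) cos(2π(k−ℓ)/q) − 2 Σ_{k=0}^{q−1} f_i(k) cos(2πk/q) + 1 ). If V > 0, then S²/V ≥ (1 − cos(2π/q))² · n·(2c − λ₂)/(λ₁ − λ₂). -/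

import Mathlib

open Finset Matrix Real

theorem sym_sum_split' (N : ℕ) (g : ℕ → ℕ → ℝ) (hg : ∀ k l, g k l = g l k) :
    ∑ k ∈ range N, ∑ l ∈ range N, g k l
      = ∑ k ∈ range N, g k k + 2 * ∑ l ∈ range N, ∑ k ∈ range l, g k l := by
  induction N with
  | zero => simp
  | succ N ih =>
    rw [Finset.sum_range_succ, Finset.sum_range_succ, Finset.sum_range_succ,
      Finset.sum_range_succ]
    have h1 : ∑ k ∈ range N, ∑ l ∈ range (N+1), g k l
        = ∑ k ∈ range N, ∑ l ∈ range N, g k l + ∑ k ∈ range N, g k N := by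
      rw [← Finset.sum_add_distrib]
      exact Finset.sum_congr rfl fun k _ => Finset.sum_range_succ _ _
    have h2 : ∑ l ∈ range N, g N l = ∑ k ∈ range N, g k N :=
      Finset.sum_congr rfl fun l _ => hg N l
    rw [h1, ih, h2]; ring

theorem cos_le_cos_first' (q k : ℕ) (hk1 : 1 ≤ k) (hk2 : 2*k ≤ q) :
    Real.cos (2 * π * k / q) ≤ Real.cos (2 * π / q) := by
  have hqpos : (0:ℝ) < q := by exact_mod_cast (by omega : 0 < q)
  have hk : (1:ℝ) ≤ k := by exact_mod_cast hk1
  apply Real.cos_le_cos_of_nonneg_of_le_pi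
  · positivity
  · rw [div_le_iff₀ hqpos]
    have : (2:ℝ) * k ≤ q := by exact_mod_cast hk2
    nlinarith [Real.pi_pos]
  · rw [div_le_div_iff₀ hqpos hqpos]
    nlinarith [mul_pos Real.pi_pos hqpos]

theorem cos_le_cos_general' (q k : ℕ) (hq : 2 ≤ q) (hk1 : 1 ≤ k) (hk2 : k < q) :
    Real.cos (2 * π * k / q) ≤ Real.cos (2 * π / q) := by
  rcases le_or_gt (2*k) q with h | h
  · exact cos_le_cos_first' q k hk1 h
  · have h1 : 1 ≤ q - k := by omega
    have h2 : 2 * (q - k) ≤ q := by omega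
    have hmain := cos_le_cos_first' q (q - k) h1 h2
    have hqpos : (0:ℝ) < q := by exact_mod_cast (by omega : 0 < q)
    have hcast : ((q - k : ℕ) : ℝ) = (q : ℝ) - k := by
      push_cast [Nat.cast_sub hk2.le]; ring
    rw [hcast] at hmain
    have heq : Real.cos (2 * π * k / q) = Real.cos (2 * π * ((q:ℝ) - k) / q) := by
      rw [← Real.cos_two_pi_sub (2 * π * k / q)]
      congr 1
      field_simp
    rw [heq]; exact hmain

theorem Vterm_bound' (q : ℕ) (hq : 2 ≤ q) (g : ℕ → ℝ) (hg0 : ∀ k < q, 0 ≤ g k)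
    (hg1 : ∑ k ∈ range q, g k = 1) :
    ∑ k ∈ Finset.range q, (g k) ^ 2
        + 2 * ∑ l ∈ Finset.range q, ∑ k ∈ Finset.range l,
            g k * g l * Real.cos (2 * π * ((k : ℝ) - l) / q)
        - 2 * ∑ k ∈ Finset.range q, g k * Real.cos (2 * π * k / q) + 1
      ≤ 4 * (∑ k ∈ Finset.Ico 1 q, g k) ^ 2 := by
  set X := ∑ k ∈ Finset.Ico 1 q, g k with hX
  set a := ∑ k ∈ Finset.range q, g k * Real.cos (2 * π * k / q) with ha
  set b := ∑ k ∈ Finset.range q, g k * Real.sin (2 * π * k / q) with hb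
  have hsym : ∀ k l : ℕ, g k * g l * Real.cos (2 * π * ((k : ℝ) - l) / q)
      = g l * g k * Real.cos (2 * π * ((l : ℝ) - k) / q) := by
    intro k l
    have : (2 * π * ((l : ℝ) - k) / q) = -(2 * π * ((k : ℝ) - l) / q) := by ring
    rw [this, Real.cos_neg]; ring
  have hab : a ^ 2 + b ^ 2
      = ∑ k ∈ range q, ∑ l ∈ range q, g k * g l * Real.cos (2 * π * ((k : ℝ) - l) / q) := by
    rw [sq, sq, Finset.sum_mul_sum, Finset.sum_mul_sum, ← Finset.sum_add_distrib]
    refine Finset.sum_congr rfl fun k _ => ?_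
    rw [← Finset.sum_add_distrib]
    refine Finset.sum_congr rfl fun l _ => ?_
    have h1 : 2 * π * ((k : ℝ) - l) / q = 2 * π * k / q - 2 * π * l / q := by ring
    rw [h1, Real.cos_sub]; ring
  have hdiag : ∀ k ∈ range q, g k * g k * Real.cos (2 * π * ((k : ℝ) - k) / q) = (g k)^2 := by
    intro k _; simp [sq]
  have hsplit := sym_sum_split' q (fun k l => g k * g l * Real.cos (2 * π * ((k : ℝ) - l) / q)) hsym
  have hident : ∑ k ∈ Finset.range q, (g k) ^ 2
        + 2 * ∑ l ∈ Finset.range q, ∑ k ∈ Finset.range l,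
            g k * g l * Real.cos (2 * π * ((k : ℝ) - l) / q)
        - 2 * a + 1 = (a - 1)^2 + b^2 := by
    have : ∑ k ∈ Finset.range q, (g k) ^ 2
        + 2 * ∑ l ∈ Finset.range q, ∑ k ∈ Finset.range l,
            g k * g l * Real.cos (2 * π * ((k : ℝ) - l) / q) = a^2 + b^2 := by
      rw [hab, hsplit, Finset.sum_congr rfl hdiag]
    rw [this]; ring
  rw [hident]
  set z : ℂ := ∑ k ∈ Finset.Ico 1 q, (g k : ℂ) * (Complex.exp ((2 * π * k / q : ℝ) * Complex.I) - 1) with hz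
  have hq0 : 0 < q := by omega
  have hsplit0 : ∀ (F : ℕ → ℝ), ∑ k ∈ range q, F k = F 0 + ∑ k ∈ Finset.Ico 1 q, F k := by
    intro F
    rw [Finset.range_eq_Ico, Finset.sum_eq_sum_Ico_succ_bot hq0]
  have hg01 : g 0 = 1 - X := by
    have := hsplit0 g
    rw [hg1] at this; rw [hX]; linarith
  have hre : z.re = a - 1 := by
    rw [hz, Complex.re_sum, ha, hsplit0 (fun k => g k * Real.cos (2 * π * k / q))]
    simp only [Complex.re_ofReal_mul, Complex.sub_re, Complex.exp_ofReal_mul_I_re, Complex.one_re]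
    rw [hg01]
    simp only [mul_sub, mul_one]
    rw [Finset.sum_sub_distrib]
    push_cast
    simp
    ring
  have him : z.im = b := by
    rw [hz, Complex.im_sum, hb, hsplit0 (fun k => g k * Real.sin (2 * π * k / q))]
    simp only [Complex.im_ofReal_mul, Complex.sub_im, Complex.exp_ofReal_mul_I_im, Complex.one_im]
    simp
  have habs : ‖z‖ ≤ 2 * X := by
    calc ‖z‖ ≤ ∑ k ∈ Finset.Ico 1 q, ‖(g k : ℂ) * (Complex.exp ((2 * π * k / q : ℝ) * Complex.I) - 1)‖ :=
          norm_sum_le _ _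
      _ ≤ ∑ k ∈ Finset.Ico 1 q, g k * 2 := by
          refine Finset.sum_le_sum fun k hk => ?_
          have hk' := Finset.mem_Ico.mp hk
          have hgk : 0 ≤ g k := hg0 k hk'.2
          rw [norm_mul, Complex.norm_real, Real.norm_eq_abs, abs_of_nonneg hgk]
          refine mul_le_mul_of_nonneg_left ?_ hgk
          calc ‖(Complex.exp ((2 * π * k / q : ℝ) * Complex.I) - 1)‖
              = ‖Complex.exp ((2 * π * k / q : ℝ) * Complex.I) - 1‖ := rfl
            _ ≤ ‖Complex.exp ((2 * π * k / q : ℝ) * Complex.I)‖ + ‖(1:ℂ)‖ := norm_sub_le _ _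
            _ = 2 := by
                rw [Complex.norm_exp_ofReal_mul_I]; norm_num
      _ = 2 * X := by rw [← Finset.sum_mul, hX]; ring
  have hXnn : 0 ≤ X := by
    rw [hX]; exact Finset.sum_nonneg fun k hk => hg0 k (Finset.mem_Ico.mp hk).2
  have hfin : (a-1)^2 + b^2 = ‖z‖ ^ 2 := by
    rw [Complex.sq_norm, Complex.normSq_apply, hre, him]; ring
  rw [hfin]
  calc ‖z‖ ^ 2 ≤ (2*X)^2 := by
        apply pow_le_pow_left₀ (norm_nonneg z) habs
    _ = 4 * X^2 := by ring

set_option maxHeartbeats 1000000 in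
/-- Main eigenvalue bound for `q`-ary PSK over AWGN: with `Hs` the 0–1 support matrix
of a `(c,d)`-regular parity-check matrix, `L = Hsᵀ Hs`, `λ₁ = cd`, and `λ₂ < λ₁` an
upper bound for the Rayleigh quotient of `L` on vectors orthogonal to the all-ones
vector, any normalized pseudocodeword matrix `(f i k)` (rows nonnegative, summing to 1,
satisfying the per-check inequalities on `x_i = ∑_{1 ≤ k < q} f i k`) with `V > 0` has
squared pseudodistance `S²/V ≥ (1 − cos(2π/q))² n (2c − λ₂)/(λ₁ − λ₂)`. -/
theorem min_pseudodistance_eigenvalue_bound {q m n : ℕ} (hq : 2 ≤ q) (c d : ℕ)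
    (Hs : Matrix (Fin m) (Fin n) ℝ)
    (h01 : ∀ j i, Hs j i = 0 ∨ Hs j i = 1)
    (hcol : ∀ i, (univ.filter (fun j => Hs j i = 1)).card = c)
    (hrow : ∀ j, (univ.filter (fun i => Hs j i = 1)).card = d)
    (lam2 : ℝ) (hlam2 : lam2 < (c : ℝ) * d)
    (h2 : ∀ v : Fin n → ℝ, ∑ i, v i = 0 →
      v ⬝ᵥ ((Hsᵀ * Hs) *ᵥ v) ≤ lam2 * ∑ i, (v i) ^ 2)
    (f : Fin n → ℕ → ℝ)
    (hf0 : ∀ i, ∀ k < q, 0 ≤ f i k)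
    (hf1 : ∀ i, ∑ k ∈ Finset.range q, f i k = 1)
    (x : Fin n → ℝ)
    (hx : ∀ i, x i = ∑ k ∈ Finset.Ico 1 q, f i k)
    (hcheck : ∀ j, ∀ ℓ, Hs j ℓ = 1 →
      ∑ i ∈ (univ.filter (fun i => Hs j i = 1)).erase ℓ, x i ≥ x ℓ)
    (S V : ℝ)
    (hS : S = 2 * ∑ i, (1 - ∑ k ∈ Finset.range q, f i k * Real.cos (2 * π * k / q)))
    (hV : V = ∑ i, (∑ k ∈ Finset.range q, (f i k) ^ 2
        + 2 * ∑ l ∈ Finset.range q, ∑ k ∈ Finset.range l,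
            f i k * f i l * Real.cos (2 * π * ((k : ℝ) - l) / q)
        - 2 * ∑ k ∈ Finset.range q, f i k * Real.cos (2 * π * k / q) + 1))
    (hVpos : 0 < V) :
    S ^ 2 / V ≥ (1 - Real.cos (2 * π / q)) ^ 2
        * (n * (2 * c - lam2) / ((c : ℝ) * d - lam2)) := by
  -- basic notation
  set γ : ℝ := 1 - Real.cos (2 * π / q) with hγdef
  have hγnn : 0 ≤ γ := by
    have := Real.cos_le_one (2 * π / q); simp [hγdef]; linarith
  have hxnn : ∀ i, 0 ≤ x i := by
    intro i; rw [hx i]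
    exact Finset.sum_nonneg fun k hk => hf0 i k (Finset.mem_Ico.mp hk).2
  set X := ∑ i, x i with hXdef
  set N2 := ∑ i, (x i)^2 with hN2def
  have hXnn : 0 ≤ X := Finset.sum_nonneg fun i _ => hxnn i
  have hN2nn : 0 ≤ N2 := Finset.sum_nonneg fun i _ => sq_nonneg _
  -- V ≤ 4 N2
  have hV4 : V ≤ 4 * N2 := by
    rw [hV, hN2def, Finset.mul_sum]
    refine Finset.sum_le_sum fun i _ => ?_
    have := Vterm_bound' q hq (f i) (hf0 i) (hf1 i)
    rw [hx i]; exact this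
  -- n > 0 and N2 > 0
  have hnpos : 0 < n := by
    rcases Nat.eq_zero_or_pos n with h | h
    · subst h
      rw [hV] at hVpos; simp at hVpos
    · exact h
  have hN2pos : 0 < N2 := by nlinarith
  -- S ≥ 2 γ X
  have hSX : 2 * γ * X ≤ S := by
    rw [hS, hXdef, Finset.mul_sum, Finset.mul_sum]
    refine Finset.sum_le_sum fun i _ => ?_
    have hrw : 1 - ∑ k ∈ Finset.range q, f i k * Real.cos (2 * π * k / q)
        = ∑ k ∈ Finset.range q, f i k * (1 - Real.cos (2 * π * k / q)) := by
      nth_rewrite 1 [← hf1 i]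
      rw [← Finset.sum_sub_distrib]
      exact Finset.sum_congr rfl fun k _ => by ring
    rw [hrw]
    have hsub : Finset.Ico 1 q ⊆ Finset.range q := by
      rw [Finset.range_eq_Ico]; exact Finset.Ico_subset_Ico (by omega) le_rfl
    have h1 : ∑ k ∈ Finset.Ico 1 q, f i k * (1 - Real.cos (2 * π * k / q))
        ≤ ∑ k ∈ Finset.range q, f i k * (1 - Real.cos (2 * π * k / q)) := by
      refine Finset.sum_le_sum_of_subset_of_nonneg hsub fun k hk _ => ?_
      have := Real.cos_le_one (2 * π * k / q)
      have := hf0 i k (Finset.mem_range.mp hk)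
      nlinarith
    have h2' : γ * x i ≤ ∑ k ∈ Finset.Ico 1 q, f i k * (1 - Real.cos (2 * π * k / q)) := by
      rw [hx i, Finset.mul_sum]
      refine Finset.sum_le_sum fun k hk => ?_
      have hk' := Finset.mem_Ico.mp hk
      have hcos := cos_le_cos_general' q k hq hk'.1 hk'.2
      have hfk := hf0 i k hk'.2
      have : γ ≤ 1 - Real.cos (2 * π * k / q) := by rw [hγdef]; linarith
      calc γ * f i k ≤ (1 - Real.cos (2 * π * k / q)) * f i k :=
            mul_le_mul_of_nonneg_right this hfk
        _ = f i k * (1 - Real.cos (2 * π * k / q)) := by ring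
    nlinarith [h1, h2']
  -- quadratic form
  have hQ : ∀ v : Fin n → ℝ, v ⬝ᵥ ((Hsᵀ * Hs) *ᵥ v) = ∑ j, (∑ i, Hs j i * v i)^2 := by
    intro v
    rw [← Matrix.mulVec_mulVec, Matrix.dotProduct_mulVec, Matrix.vecMul_transpose]
    simp [Matrix.mulVec, dotProduct, sq]
  set s : Fin m → ℝ := fun j => ∑ i, Hs j i * x i with hsdef
  have hsfil : ∀ j, s j = ∑ i ∈ univ.filter (fun i => Hs j i = 1), x i := by
    intro j
    rw [hsdef, Finset.sum_filter]
    refine Finset.sum_congr rfl fun i _ => ?_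
    rcases h01 j i with h | h <;> simp [h]
  have hrowsum : ∀ j, ∑ i, Hs j i = (d:ℝ) := by
    intro j
    rw [← hrow j]
    have hrw : ∀ i : Fin n, Hs j i = if Hs j i = 1 then (1:ℝ) else 0 := by
      intro i; rcases h01 j i with h | h <;> simp [h]
    rw [Finset.sum_congr rfl fun i _ => hrw i, Finset.sum_boole]
  have hcolsum : ∀ i, ∑ j, Hs j i = (c:ℝ) := by
    intro i
    rw [← hcol i]
    have hrw : ∀ j : Fin m, Hs j i = if Hs j i = 1 then (1:ℝ) else 0 := by
      intro j; rcases h01 j i with h | h <;> simp [h]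
    rw [Finset.sum_congr rfl fun j _ => hrw j, Finset.sum_boole]
  have hmd : (m:ℝ) * d = (n:ℝ) * c := by
    have hcomm : ∑ j, ∑ i, Hs j i = ∑ i, ∑ j, Hs j i := Finset.sum_comm
    rw [Finset.sum_congr rfl fun j _ => hrowsum j,
      Finset.sum_congr rfl fun i _ => hcolsum i] at hcomm
    simpa [Finset.sum_const, Finset.card_univ, nsmul_eq_mul] using hcomm
  -- lower bound on the quadratic form
  have hlow : 2 * c * N2 ≤ ∑ j, (s j)^2 := by
    have hperj : ∀ j, ∑ ℓ ∈ univ.filter (fun i => Hs j i = 1), 2 * (x ℓ)^2 ≤ (s j)^2 := by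
      intro j
      have hsq : (s j)^2 = ∑ ℓ ∈ univ.filter (fun i => Hs j i = 1), s j * x ℓ := by
        rw [sq]; nth_rewrite 2 [hsfil j]; rw [Finset.mul_sum]
      rw [hsq]
      refine Finset.sum_le_sum fun ℓ hℓ => ?_
      have hℓ1 : Hs j ℓ = 1 := (Finset.mem_filter.mp hℓ).2
      have hch := hcheck j ℓ hℓ1
      have hadd : x ℓ + ∑ i ∈ (univ.filter (fun i => Hs j i = 1)).erase ℓ, x i = s j := by
        rw [hsfil j]; exact Finset.add_sum_erase _ _ hℓ
      have h2x : 2 * x ℓ ≤ s j := by rw [← hadd]; linarith [hch]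
      calc 2 * (x ℓ)^2 = (2 * x ℓ) * x ℓ := by ring
        _ ≤ s j * x ℓ := mul_le_mul_of_nonneg_right h2x (hxnn ℓ)
    have hcount : ∑ j, ∑ ℓ ∈ univ.filter (fun i => Hs j i = 1), 2 * (x ℓ)^2
        = 2 * c * N2 := by
      have : ∀ j : Fin m, ∑ ℓ ∈ univ.filter (fun i => Hs j i = 1), 2 * (x ℓ)^2
          = ∑ ℓ, if Hs j ℓ = 1 then 2 * (x ℓ)^2 else 0 := fun j => Finset.sum_filter _ _
      rw [Finset.sum_congr rfl fun j _ => this j, Finset.sum_comm]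
      have hinner : ∀ ℓ : Fin n, (∑ j, if Hs j ℓ = 1 then 2 * (x ℓ)^2 else 0)
          = (c:ℝ) * (2 * (x ℓ)^2) := by
        intro ℓ
        rw [← Finset.sum_filter, Finset.sum_const, nsmul_eq_mul, hcol ℓ]
      rw [Finset.sum_congr rfl fun ℓ _ => hinner ℓ, hN2def, Finset.mul_sum]
      exact Finset.sum_congr rfl fun ℓ _ => by ring
    calc 2 * c * N2 = ∑ j, ∑ ℓ ∈ univ.filter (fun i => Hs j i = 1), 2 * (x ℓ)^2 :=
          hcount.symm
      _ ≤ ∑ j, (s j)^2 := Finset.sum_le_sum fun j _ => hperj j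
  -- upper bound via the eigenvalue hypothesis
  have hnR : (0:ℝ) < n := by exact_mod_cast hnpos
  set t : ℝ := X / n with htdef
  set y : Fin n → ℝ := fun i => x i - t with hydef
  have hy0 : ∑ i, y i = 0 := by
    rw [hydef]
    simp only [Finset.sum_sub_distrib, Finset.sum_const, Finset.card_univ,
      Fintype.card_fin, nsmul_eq_mul]
    rw [htdef, ← hXdef]
    field_simp
    ring
  set w : Fin m → ℝ := fun j => ∑ i, Hs j i * y i with hwdef
  have hw0 : ∑ j, w j = 0 := by
    rw [hwdef]
    simp only
    rw [Finset.sum_comm]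
    have : ∀ i : Fin n, ∑ j, Hs j i * y i = (c:ℝ) * y i := by
      intro i; rw [← Finset.sum_mul, hcolsum i]
    rw [Finset.sum_congr rfl fun i _ => this i, ← Finset.mul_sum, hy0, mul_zero]
  have hsj : ∀ j, s j = w j + t * d := by
    intro j
    have : ∀ i : Fin n, Hs j i * x i = Hs j i * y i + Hs j i * t := by
      intro i; rw [hydef]; ring
    rw [hsdef]
    simp only
    rw [Finset.sum_congr rfl fun i _ => this i, Finset.sum_add_distrib,
      ← Finset.sum_mul, hrowsum j, hwdef]
    ring
  have hy2 : ∑ i, (y i)^2 = N2 - X^2 / n := by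
    have hexp : ∀ i : Fin n, (y i)^2 = (x i)^2 - 2 * t * x i + t^2 := by
      intro i; rw [hydef]; ring
    rw [Finset.sum_congr rfl fun i _ => hexp i]
    simp only [Finset.sum_add_distrib, Finset.sum_sub_distrib, Finset.sum_const,
      Finset.card_univ, Fintype.card_fin, nsmul_eq_mul, ← Finset.mul_sum, ← hXdef, ← hN2def]
    rw [htdef]
    field_simp
    ring
  have hwq : ∑ j, (w j)^2 ≤ lam2 * (N2 - X^2 / n) := by
    have := h2 y hy0
    rw [hQ y] at this
    rw [← hy2]
    exact this
  have hupper : ∑ j, (s j)^2 ≤ lam2 * (N2 - X^2/n) + (c:ℝ)*d*(X^2/n) := by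
    have hexp : ∀ j, (s j)^2 = (w j)^2 + 2*t*d*(w j) + (t*d)^2 := by
      intro j; rw [hsj j]; ring
    rw [Finset.sum_congr rfl fun j _ => hexp j]
    simp only [Finset.sum_add_distrib, Finset.sum_const, Finset.card_univ,
      Fintype.card_fin, nsmul_eq_mul, ← Finset.mul_sum]
    rw [hw0, mul_zero]
    have hmt : (m:ℝ) * (t*d)^2 = (c:ℝ)*d*(X^2/n) := by
      have : (m:ℝ) * (t*d)^2 = ((m:ℝ)*d) * d * t^2 := by ring
      rw [this, hmd, htdef]
      field_simp
    rw [hmt]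
    linarith [hwq]
  have key : (2*(c:ℝ) - lam2) * N2 ≤ ((c:ℝ)*d - lam2) * (X^2/n) := by
    have h := le_trans hlow hupper
    nlinarith [h]
  -- conclusion
  have hD : 0 < (c:ℝ)*d - lam2 := by linarith
  have hkey2 : (n:ℝ)*(2*(c:ℝ) - lam2)/((c:ℝ)*d - lam2) ≤ X^2/N2 := by
    rw [div_le_div_iff₀ hD hN2pos]
    have h' := mul_le_mul_of_nonneg_left key hnR.le
    have hrhs : (n:ℝ) * (((c:ℝ)*d - lam2) * (X^2/n)) = X^2 * ((c:ℝ)*d - lam2) := by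
      field_simp
    rw [hrhs] at h'
    nlinarith [h']
  rw [ge_iff_le, le_div_iff₀ hVpos]
  have hγX : 0 ≤ 2*γ*X := by positivity
  calc γ^2 * ((n:ℝ) * (2*(c:ℝ) - lam2) / ((c:ℝ)*d - lam2)) * V
      ≤ γ^2 * (X^2/N2) * V := by
        have h1 := mul_le_mul_of_nonneg_left hkey2 (sq_nonneg γ)
        exact mul_le_mul_of_nonneg_right h1 hVpos.le
    _ ≤ γ^2 * (X^2/N2) * (4*N2) := by
        have h0 : 0 ≤ γ^2 * (X^2/N2) := by positivity
        exact mul_le_mul_of_nonneg_left hV4 h0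
    _ = (2*γ*X)^2 := by
        field_simp
        ring
    _ ≤ S^2 := pow_le_pow_left₀ hγX hSX 2
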